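/- Let M be the free monoid on {α, β} with the reverse-and-swap involution x ↦ x̄, and A the free ℂ-vector space on M with the product x ⊙ y = Σ_{x = a·g, y = ḡ·b} a·b. Let E_n ⊆ A be the span of words of length ≤ n. If J : A → A is an algebra homomorphism from the free (concatenation) algebra structure to (A, ⊙) with J(e) = e, J(α) = α, J(β) = β, then (J − Id)(E_n) ⊆ E_{n−1} for all n ≥ 1; consequently J restricted to each E_n is bijective and J : A → A is a linear isomorphism. -/

import Mathlib

/-- Words on the alphabet `{α, β}`: `la = α = true`, `lb = β = false`. -/
abbrev Wd := List Bool

def la : Bool := true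
def lb : Bool := false

/-- The reverse-and-swap involution `x ↦ x̄`. -/
def bar (w : Wd) : Wd := (w.map not).reverse

/-- `x ⊙ y = ∑_{x = a·g, y = ḡ·b} a·b` for words `x, y`. -/
noncomputable def wp (x y : Wd) : Wd →₀ ℂ :=
  ∑ k ∈ Finset.range (min x.length y.length + 1),
    if y.take k = bar (x.drop (x.length - k))
    then Finsupp.single (x.take (x.length - k) ++ y.drop k) (1 : ℂ) else 0

/-- The bilinear extension of `⊙` to the free vector space `A` on words. -/
noncomputable def odot (f g : Wd →₀ ℂ) : Wd →₀ ℂ :=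
  f.sum fun x cx => g.sum fun y cy => (cx * cy) • wp x y

/-- The concatenation (free-algebra) product on `A`. -/
noncomputable def cdot (f g : Wd →₀ ℂ) : Wd →₀ ℂ :=
  f.sum fun x cx => g.sum fun y cy => Finsupp.single (x ++ y) (cx * cy)

/-- `E n`: the span of the words of length at most `n`. -/
noncomputable def En (n : ℕ) : Submodule ℂ (Wd →₀ ℂ) :=
  Submodule.span ℂ ((fun w => Finsupp.single w (1 : ℂ)) '' {w : Wd | w.length ≤ n})

lemma En_mono {m n : ℕ} (h : m ≤ n) : En m ≤ En n :=
  Submodule.span_mono (Set.image_mono fun _ hw => le_trans hw h)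

lemma single_mem_En {w : Wd} {n : ℕ} (h : w.length ≤ n) :
    Finsupp.single w (1 : ℂ) ∈ En n :=
  Submodule.subset_span ⟨w, h, rfl⟩

lemma mem_En_self (f : Wd →₀ ℂ) : f ∈ En (f.support.sup List.length) := by
  have h : (∑ w ∈ f.support, Finsupp.single w (f w)) ∈ En (f.support.sup List.length) := by
    refine Submodule.sum_mem _ fun w hw => ?_
    have : Finsupp.single w (f w) = (f w) • Finsupp.single w (1 : ℂ) := by
      rw [Finsupp.smul_single, smul_eq_mul, mul_one]
    rw [this]
    exact Submodule.smul_mem _ _ (single_mem_En (Finset.le_sup hw))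
  have h2 : f.sum (fun w c => Finsupp.single w c) = ∑ w ∈ f.support, Finsupp.single w (f w) := rfl
  rw [← h2] at h
  rwa [Finsupp.sum_single] at h

lemma wp_mem (x y : Wd) : wp x y ∈ En (x.length + y.length) := by
  unfold wp
  refine Submodule.sum_mem _ fun k _ => ?_
  split
  · refine single_mem_En ?_
    simp only [List.length_append, List.length_take, List.length_drop]
    omega
  · exact Submodule.zero_mem _

lemma odot_single_left (x : Wd) (g : Wd →₀ ℂ) :
    odot (Finsupp.single x 1) g = g.sum fun y cy => cy • wp x y := by
  unfold odot
  rw [Finsupp.sum_single_index]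
  · simp
  · simp [Finsupp.sum]

lemma odot_single_left_add (x : Wd) (g h : Wd →₀ ℂ) :
    odot (Finsupp.single x 1) (g + h)
      = odot (Finsupp.single x 1) g + odot (Finsupp.single x 1) h := by
  simp only [odot_single_left]
  exact Finsupp.sum_add_index' (fun _ => zero_smul _ _) (fun _ b c => add_smul b c _)

lemma odot_single_left_smul (x : Wd) (c : ℂ) (g : Wd →₀ ℂ) :
    odot (Finsupp.single x 1) (c • g) = c • odot (Finsupp.single x 1) g := by
  simp only [odot_single_left]
  have h := Finsupp.sum_smul_index' (g := g) (b := c)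
    (h := fun y cy => cy • wp x y) (fun i => zero_smul ℂ (wp x i))
  rw [h, Finsupp.smul_sum]
  simp only [smul_eq_mul, mul_smul]

lemma odot_single_left_zero (x : Wd) : odot (Finsupp.single x 1) (0 : Wd →₀ ℂ) = 0 := by
  rw [odot_single_left]; simp

lemma odot_single_single (x y : Wd) :
    odot (Finsupp.single x 1) (Finsupp.single y 1) = wp x y := by
  rw [odot_single_left, Finsupp.sum_single_index] <;> simp

lemma odot_single_left_mem {x : Wd} {m n : ℕ} (h : x.length + m ≤ n) {g : Wd →₀ ℂ}
    (hg : g ∈ En m) : odot (Finsupp.single x 1) g ∈ En n := by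
  induction hg using Submodule.span_induction with
  | mem p hp =>
      obtain ⟨w, hw, rfl⟩ := hp
      simp only [Set.mem_setOf_eq] at hw
      rw [odot_single_single]
      exact En_mono (by omega : x.length + w.length ≤ n) (wp_mem x w)
  | zero => rw [odot_single_left_zero]; exact Submodule.zero_mem _
  | add a b _ _ ha hb => rw [odot_single_left_add]; exact Submodule.add_mem _ ha hb
  | smul c a _ ha => rw [odot_single_left_smul]; exact Submodule.smul_mem _ _ ha

lemma cdot_single_single (x y : Wd) :
    cdot (Finsupp.single x (1 : ℂ)) (Finsupp.single y 1) = Finsupp.single (x ++ y) 1 := by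
  unfold cdot
  rw [Finsupp.sum_single_index, Finsupp.sum_single_index] <;> simp [Finsupp.sum]

section Main
variable (J : (Wd →₀ ℂ) →ₗ[ℂ] (Wd →₀ ℂ))
    (hJe : J (Finsupp.single ([] : Wd) 1) = Finsupp.single ([] : Wd) 1)
    (hJa : J (Finsupp.single [la] 1) = Finsupp.single [la] 1)
    (hJb : J (Finsupp.single [lb] 1) = Finsupp.single [lb] 1)
    (hJm : ∀ f g : Wd →₀ ℂ, J (cdot f g) = odot (J f) (J g))

include hJe hJa hJb hJm in
lemma key (w : Wd) :
    J (Finsupp.single w 1) - Finsupp.single w 1 ∈ En (w.length - 1) := by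
  induction w with
  | nil => rw [hJe, sub_self]; exact Submodule.zero_mem _
  | cons x t ih =>
    have hx : J (Finsupp.single [x] 1) = Finsupp.single [x] 1 := by
      cases x
      · exact hJb
      · exact hJa
    have h1 : J (Finsupp.single (x :: t) 1)
        = odot (Finsupp.single [x] 1) (J (Finsupp.single t 1)) := by
      have : Finsupp.single (x :: t) (1 : ℂ)
          = cdot (Finsupp.single [x] 1) (Finsupp.single t 1) := by
        rw [cdot_single_single]; rfl
      rw [this, hJm, hx]
    set r := J (Finsupp.single t 1) - Finsupp.single t 1 with hr
    have hsplit : J (Finsupp.single t 1) = Finsupp.single t 1 + r := by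
      rw [hr]; abel
    have h2 : J (Finsupp.single (x :: t) 1)
        = wp [x] t + odot (Finsupp.single [x] 1) r := by
      rw [h1, hsplit, odot_single_left_add, odot_single_single]
    have hW : wp [x] t - Finsupp.single (x :: t) 1 ∈ En t.length := by
      unfold wp
      rw [Finset.sum_range_succ']
      have h0 : (if t.take 0 = bar ([x].drop ([x].length - 0))
          then Finsupp.single ([x].take ([x].length - 0) ++ t.drop 0) (1 : ℂ) else 0)
          = Finsupp.single (x :: t) 1 := by
        simp [bar]
      rw [h0, add_sub_cancel_right]
      refine Submodule.sum_mem _ fun i _ => ?_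
      split
      · refine single_mem_En ?_
        simp only [List.length_append, List.length_take, List.length_drop,
          List.length_cons, List.length_nil]
        omega
      · exact Submodule.zero_mem _
    have hr2 : odot (Finsupp.single [x] 1) r ∈ En t.length := by
      cases t with
      | nil =>
          have : r = 0 := by rw [hr, hJe, sub_self]
          rw [this, odot_single_left_zero]
          exact Submodule.zero_mem _
      | cons y s =>
          refine odot_single_left_mem ?_ ih
          simp only [List.length_cons, List.length_nil]
          omega
    have h3 : J (Finsupp.single (x :: t) 1) - Finsupp.single (x :: t) 1
        = (wp [x] t - Finsupp.single (x :: t) 1) + odot (Finsupp.single [x] 1) r := by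
      rw [h2]; abel
    rw [h3]
    simpa using Submodule.add_mem _ hW hr2

include hJe hJa hJb hJm in
lemma sub_mem_pred {n : ℕ} {f : Wd →₀ ℂ} (hf : f ∈ En n) : J f - f ∈ En (n - 1) := by
  induction hf using Submodule.span_induction with
  | mem p hp =>
      obtain ⟨w, hw, rfl⟩ := hp
      simp only [Set.mem_setOf_eq] at hw
      exact En_mono (by omega : w.length - 1 ≤ n - 1) (key J hJe hJa hJb hJm w)
  | zero =>
      have : J 0 - 0 = 0 := by simp
      rw [this]; exact Submodule.zero_mem _
  | add a b _ _ ha hb =>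
      have : J (a + b) - (a + b) = (J a - a) + (J b - b) := by rw [map_add]; abel
      rw [this]; exact Submodule.add_mem _ ha hb
  | smul c a _ ha =>
      have : J (c • a) - c • a = c • (J a - a) := by rw [map_smul, smul_sub]
      rw [this]; exact Submodule.smul_mem _ _ ha

include hJe hJa hJb hJm in
lemma maps_En {n : ℕ} {f : Wd →₀ ℂ} (hf : f ∈ En n) : J f ∈ En n := by
  have : J f = (J f - f) + f := by abel
  rw [this]
  exact Submodule.add_mem _ (En_mono (Nat.sub_le n 1) (sub_mem_pred J hJe hJa hJb hJm hf)) hf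

include hJe in
lemma fix_E0 {f : Wd →₀ ℂ} (hf : f ∈ En 0) : J f = f := by
  induction hf using Submodule.span_induction with
  | mem p hp =>
      obtain ⟨w, hw, rfl⟩ := hp
      have : w = [] := List.length_eq_zero_iff.mp (Nat.le_zero.mp hw)
      rw [this]; exact hJe
  | zero => simp
  | add a b _ _ ha hb => rw [map_add, ha, hb]
  | smul c a _ ha => rw [map_smul, ha]

include hJe hJa hJb hJm in
lemma ker_triv : ∀ n : ℕ, ∀ f ∈ En n, J f = 0 → f = 0 := by
  intro n
  induction n with
  | zero => intro f hf h0; rw [← fix_E0 J hJe hf, h0]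
  | succ n ih =>
      intro f hf h0
      have h1 : J f - f ∈ En n := by
        simpa using sub_mem_pred J hJe hJa hJb hJm hf
      have h2 : f ∈ En n := by
        have : f = -(J f - f) := by rw [h0]; abel
        rw [this]; exact Submodule.neg_mem _ h1
      exact ih f h2 h0

include hJe hJa hJb hJm in
lemma J_inj : Function.Injective J := by
  rw [← LinearMap.ker_eq_bot, LinearMap.ker_eq_bot']
  intro f h0
  exact ker_triv J hJe hJa hJb hJm _ f (mem_En_self f) h0

noncomputable instance (n : ℕ) : FiniteDimensional ℂ (En n) :=
  FiniteDimensional.span_of_finite ℂ ((List.finite_length_le Bool n).image _)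

include hJe hJa hJb hJm in
lemma map_En_eq (n : ℕ) : Submodule.map J (En n) = En n := by
  refine Submodule.eq_of_le_of_finrank_le ?_ ?_
  · rintro _ ⟨f, hf, rfl⟩
    exact maps_En J hJe hJa hJb hJm hf
  · exact le_of_eq
      (Submodule.equivMapOfInjective J (J_inj J hJe hJa hJb hJm) (En n)).finrank_eq

end Main

theorem stmt19 (J : (Wd →₀ ℂ) →ₗ[ℂ] (Wd →₀ ℂ))
    (hJe : J (Finsupp.single ([] : Wd) 1) = Finsupp.single ([] : Wd) 1)
    (hJa : J (Finsupp.single [la] 1) = Finsupp.single [la] 1)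
    (hJb : J (Finsupp.single [lb] 1) = Finsupp.single [lb] 1)
    (hJm : ∀ f g : Wd →₀ ℂ, J (cdot f g) = odot (J f) (J g)) :
    (∀ n : ℕ, 1 ≤ n → ∀ f ∈ En n, J f - f ∈ En (n - 1)) ∧
    (∀ n : ℕ, Set.BijOn J (En n) (En n)) ∧
    Function.Bijective J := by
  have hinj := J_inj J hJe hJa hJb hJm
  have hmap := map_En_eq J hJe hJa hJb hJm
  refine ⟨fun n _ f hf => sub_mem_pred J hJe hJa hJb hJm hf, fun n => ?_, hinj, ?_⟩
  · refine ⟨fun f hf => maps_En J hJe hJa hJb hJm hf, hinj.injOn, fun g hg => ?_⟩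
    rw [← hmap n] at hg
    obtain ⟨f, hf, hfg⟩ := hg
    exact ⟨f, hf, hfg⟩
  · intro g
    have hg : g ∈ En (g.support.sup List.length) := mem_En_self g
    rw [← hmap (g.support.sup List.length)] at hg
    obtain ⟨f, _, hfg⟩ := hg
    exact ⟨f, hfg⟩
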